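/- Let θ: ℝ → ℂ be a C¹ function supported in [0, M] for some M > 1. For t ≠ 0 and x > 0 define J(t,x) = ∫_1^∞ (s-1)^{-1/2} θ(s) e^{i x² s/(4t)} ds. Then there is a constant C (depending on θ and M) such that |J(t,x)| ≤ C √|t| / x whenever x > √|t| > 0. -/

import Mathlib

open MeasureTheory

set_option maxHeartbeats 2000000 in
private lemma osc_key (M : ℝ) (hM : 1 < M) (θ : ℝ → ℂ) (hθ : ContDiff ℝ 1 θ)
    (hsupp : Function.support θ ⊆ Set.Icc 0 M) :
    ∃ C > 0, ∀ l : ℝ, 1/4 ≤ |l| →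
      ‖∫ s in Set.Ioi (1:ℝ), (((s - 1) ^ (-(1:ℝ)/2) : ℝ) : ℂ) * θ s *
          Complex.exp ((l : ℂ) * (s : ℂ) * Complex.I)‖ ≤ C / Real.sqrt |l| := by
  have hθc : Continuous θ := hθ.continuous
  have hθ'c : Continuous (deriv θ) := hθ.continuous_deriv le_rfl
  have hcs : HasCompactSupport θ := HasCompactSupport.intro isCompact_Icc
    (fun x hx => Function.notMem_support.mp (fun h => hx (hsupp h)))
  obtain ⟨K₁, hK₁⟩ := hcs.exists_bound_of_continuous hθc
  obtain ⟨K₂, hK₂⟩ := hcs.deriv.exists_bound_of_continuous hθ'c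
  set K : ℝ := max 1 (max K₁ K₂) with hK
  have hK1 : (1:ℝ) ≤ K := le_max_left _ _
  have hKθ : ∀ s, ‖θ s‖ ≤ K := fun s => (hK₁ s).trans ((le_max_left _ _).trans (le_max_right _ _))
  have hKθ' : ∀ s, ‖deriv θ s‖ ≤ K :=
    fun s => (hK₂ s).trans ((le_max_right _ _).trans (le_max_right _ _))
  have hK0 : 0 < K := lt_of_lt_of_le one_pos hK1
  have hsM : 0 ≤ Real.sqrt M := Real.sqrt_nonneg M
  refine ⟨4*K*(1+Real.sqrt M), by positivity, ?_⟩
  intro l hl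
  -- basic quantities
  set L := |l| with hLdef
  have hL0 : 0 < L := lt_of_lt_of_le (by norm_num) hl
  have hl0 : l ≠ 0 := fun h => by simp [hLdef, h] at hL0
  set sL := Real.sqrt L with hsLdef
  have hsL0 : 0 < sL := Real.sqrt_pos.mpr hL0
  have hsLhalf : (1:ℝ)/2 ≤ sL := by
    rw [hsLdef, show (1:ℝ)/2 = Real.sqrt (1/4) by
      rw [show (1:ℝ)/4 = (1/2)^2 by norm_num, Real.sqrt_sq (by norm_num)]]
    exact Real.sqrt_le_sqrt hl
  have hsLsq : sL * sL = L := Real.mul_self_sqrt hL0.le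
  set δ := L⁻¹ with hδdef
  have hδ0 : 0 < δ := inv_pos.mpr hL0
  have hsqδ : Real.sqrt δ = sL⁻¹ := by rw [hδdef, Real.sqrt_inv, hsLdef]
  set a := 1 + δ with hadef
  have ha1 : 1 < a := by linarith
  have hδrpow' : δ ^ ((1:ℝ)/2) = sL⁻¹ := by rw [← Real.sqrt_eq_rpow, hsqδ]
  have hδrpow : δ ^ (-(1:ℝ)/2) = sL := by
    rw [show (-(1:ℝ)/2) = -((1:ℝ)/2) by ring, Real.rpow_neg hδ0.le, hδrpow', inv_inv]
  -- the integrand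
  set F : ℝ → ℂ := fun s => (((s - 1) ^ (-(1:ℝ)/2) : ℝ) : ℂ) * θ s *
      Complex.exp ((l : ℂ) * (s : ℂ) * Complex.I) with hFdef
  have hθ0 : ∀ s : ℝ, M < s → θ s = 0 := fun s hs => by
    by_contra h
    exact absurd ((hsupp (Function.mem_support.mpr h)).2) (not_le.mpr hs)
  have hF0 : ∀ s : ℝ, M < s → F s = 0 := fun s hs => by simp [hFdef, hθ0 s hs]
  have hexp : ∀ s : ℝ, ‖Complex.exp ((l:ℂ) * (s:ℂ) * Complex.I)‖ = 1 := fun s => by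
    rw [show ((l:ℂ) * (s:ℂ) * Complex.I) = ((l*s : ℝ) : ℂ) * Complex.I by push_cast; ring,
      Complex.norm_exp_ofReal_mul_I]
  have hFnorm : ∀ s : ℝ, 1 < s → ‖F s‖ ≤ K * (s-1) ^ (-(1:ℝ)/2) := by
    intro s hs
    rw [hFdef]
    simp only [norm_mul, hexp, mul_one, Complex.norm_real, Real.norm_eq_abs,
      abs_of_nonneg (Real.rpow_nonneg (by linarith : (0:ℝ) ≤ s - 1) _)]
    rw [mul_comm K _]
    exact mul_le_mul_of_nonneg_left (hKθ s) (Real.rpow_nonneg (by linarith) _)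
  -- integrability of the singular weight
  have hIntSing : IntervalIntegrable (fun s : ℝ => (s-1) ^ (-(1:ℝ)/2)) volume 1 a := by
    have := (intervalIntegral.intervalIntegrable_rpow' (a := 0) (b := a - 1) (r := -(1:ℝ)/2)
      (by norm_num)).comp_sub_right 1
    simpa using this
  -- continuity of F away from 1
  have hFcont : ContinuousOn F (Set.Ioi 1) := by
    apply ContinuousOn.mul
    apply ContinuousOn.mul
    · refine Complex.continuous_ofReal.comp_continuousOn (fun s hs => ?_)
      exact ((continuousAt_id.sub continuousAt_const).rpow_const
        (Or.inl (by exact sub_ne_zero.mpr (ne_of_gt hs)))).continuousWithinAt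
    · exact hθc.continuousOn
    · exact (Complex.continuous_exp.comp
        ((continuous_const.mul Complex.continuous_ofReal).mul continuous_const)).continuousOn
  have hFms : ∀ b : ℝ, AEStronglyMeasurable F (volume.restrict (Set.Ioc 1 b)) :=
    fun b => (hFcont.mono Set.Ioc_subset_Ioi_self).aestronglyMeasurable measurableSet_Ioc
  -- integrability of F on Ioc 1 b
  have hwInt : IntegrableOn (fun s : ℝ => K * (s-1) ^ (-(1:ℝ)/2)) (Set.Ioc 1 a) := by
    exact ((intervalIntegrable_iff_integrableOn_Ioc_of_le ha1.le).mp hIntSing).const_mul K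
  have hFInt : IntegrableOn F (Set.Ioc 1 a) := by
    refine Integrable.mono' hwInt (hFms a) ?_
    exact (ae_restrict_iff' measurableSet_Ioc).mpr (ae_of_all _ fun s hs => hFnorm s hs.1)
  have hFIntb : ∀ b : ℝ, 1 < b → IntegrableOn F (Set.Ioc 1 b) := by
    intro b hb
    have hIS : IntervalIntegrable (fun s : ℝ => (s-1) ^ (-(1:ℝ)/2)) volume 1 b := by
      have := (intervalIntegral.intervalIntegrable_rpow' (a := 0) (b := b - 1) (r := -(1:ℝ)/2)
        (by norm_num)).comp_sub_right 1
      simpa using this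
    refine Integrable.mono'
      (((intervalIntegrable_iff_integrableOn_Ioc_of_le hb.le).mp hIS).const_mul K)
      (hFms b) ?_
    exact (ae_restrict_iff' measurableSet_Ioc).mpr (ae_of_all _ fun s hs => hFnorm s hs.1)
  have hFIoi : IntegrableOn F (Set.Ioi 1) := by
    rw [← Set.Ioc_union_Ioi_eq_Ioi (le_of_lt (by linarith : (1:ℝ) < M + 1))]
    refine (hFIntb (M+1) (by linarith)).union ?_
    exact (integrableOn_congr_fun (fun s hs => hF0 s (by
      simp only [Set.mem_Ioi] at hs; linarith)) measurableSet_Ioi).mpr (integrableOn_zero)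
  have hTail : ∀ c : ℝ, M ≤ c → (∫ s in Set.Ioi c, F s) = 0 := fun c hc => by
    rw [setIntegral_congr_fun measurableSet_Ioi
      (fun s hs => hF0 s (lt_of_le_of_lt hc hs))]
    exact integral_zero _ _
  -- split the integral at a
  have hsplit : (∫ s in Set.Ioi 1, F s)
      = (∫ s in Set.Ioc 1 a, F s) + ∫ s in Set.Ioi a, F s := by
    rw [← setIntegral_union (Set.Ioc_disjoint_Ioi le_rfl) measurableSet_Ioi hFInt
      (hFIoi.mono_set (Set.Ioi_subset_Ioi ha1.le)), Set.Ioc_union_Ioi_eq_Ioi ha1.le]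
  -- piece 1
  have hP1 : ‖∫ s in Set.Ioc 1 a, F s‖ ≤ 2 * K / sL := by
    have hval : (∫ s in Set.Ioc 1 a, K * (s-1) ^ (-(1:ℝ)/2)) = 2 * K / sL := by
      rw [← intervalIntegral.integral_of_le ha1.le, intervalIntegral.integral_const_mul,
        intervalIntegral.integral_comp_sub_right (fun u : ℝ => u ^ (-(1:ℝ)/2)) 1,
        show (1:ℝ) - 1 = 0 by ring, show a - 1 = δ by rw [hadef]; ring,
        integral_rpow (Or.inl (by norm_num)),
        show (-(1:ℝ)/2 + 1) = (1:ℝ)/2 by ring, hδrpow',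
        Real.zero_rpow (by norm_num : (1:ℝ)/2 ≠ 0)]
      field_simp
      ring
    calc ‖∫ s in Set.Ioc 1 a, F s‖ ≤ ∫ s in Set.Ioc 1 a, K * (s-1) ^ (-(1:ℝ)/2) :=
        norm_integral_le_of_norm_le hwInt
          ((ae_restrict_iff' measurableSet_Ioc).mpr (ae_of_all _ fun s hs => hFnorm s hs.1))
      _ = 2 * K / sL := hval
  rcases le_or_gt (M+1) a with hcase | hcase
  · -- a is beyond the support: only the first piece matters
    have hz : (∫ s in Set.Ioi a, F s) = 0 := hTail a (by linarith)
    rw [hsplit, hz, add_zero]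
    refine hP1.trans ?_
    have h1 : 2*K ≤ 4*K*(1+Real.sqrt M) := by nlinarith
    exact (div_le_div_iff_of_pos_right hsL0).mpr h1
  · -- integration by parts on [a, M+1]
    have hN1 : (1:ℝ) < M + 1 := by linarith
    have hIoia : (∫ s in Set.Ioi a, F s) = ∫ s in a..(M+1), F s := by
      rw [intervalIntegral.integral_of_le hcase.le, ← Set.Ioc_union_Ioi_eq_Ioi hcase.le,
        setIntegral_union (Set.Ioc_disjoint_Ioi le_rfl) measurableSet_Ioi
          ((hFIntb (M+1) hN1).mono_set (Set.Ioc_subset_Ioc_left ha1.le))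
          (hFIoi.mono_set (Set.Ioi_subset_Ioi (by linarith))),
        hTail (M+1) (by linarith), add_zero]
    set u : ℝ → ℂ := fun y => (((y - 1) ^ (-(1:ℝ)/2) : ℝ) : ℂ) * θ y with hudef
    set u' : ℝ → ℂ := fun y => (((-(1:ℝ)/2) * (y - 1) ^ (-(1:ℝ)/2 - 1) : ℝ) : ℂ) * θ y
      + (((y - 1) ^ (-(1:ℝ)/2) : ℝ) : ℂ) * deriv θ y with hu'def
    set v : ℝ → ℂ := fun y => Complex.exp ((l:ℂ) * (y:ℂ) * Complex.I) / ((l:ℂ) * Complex.I)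
      with hvdef
    set v' : ℝ → ℂ := fun y => Complex.exp ((l:ℂ) * (y:ℂ) * Complex.I) with hv'def
    have hlI : ((l:ℂ) * Complex.I) ≠ 0 :=
      mul_ne_zero (Complex.ofReal_ne_zero.mpr hl0) Complex.I_ne_zero
    have hnormlI : ‖(l:ℂ) * Complex.I‖ = L := by
      simp [map_mul, hLdef]
    have hu : ∀ s ∈ Set.Icc a (M+1), HasDerivAt u (u' s) s := by
      intro s hs
      have hs1 : (1:ℝ) < s := lt_of_lt_of_le ha1 hs.1
      have h1 : HasDerivAt (fun y : ℝ => (y - 1) ^ (-(1:ℝ)/2))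
          ((-(1:ℝ)/2) * (s - 1) ^ (-(1:ℝ)/2 - 1)) s := by
        have h2 := ((hasDerivAt_id s).sub_const 1).rpow_const (p := -(1:ℝ)/2)
          (Or.inl (by simp only [id_eq]; exact sub_ne_zero.mpr (ne_of_gt hs1)))
        simpa using h2
      have h3 := (h1.ofReal_comp).mul ((hθ.differentiable one_ne_zero s).hasDerivAt)
      rw [hudef, hu'def]
      exact h3
    have hv : ∀ s : ℝ, HasDerivAt v (v' s) s := by
      intro s
      have h0 : HasDerivAt (fun y : ℝ => ((y:ℂ))) 1 s := by
        simpa using (hasDerivAt_id s).ofReal_comp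
      have h1 : HasDerivAt (fun y : ℝ => (l:ℂ) * (y:ℂ) * Complex.I) ((l:ℂ) * Complex.I) s := by
        simpa using (h0.const_mul (l:ℂ)).mul_const Complex.I
      have h3 := (h1.cexp).div_const ((l:ℂ) * Complex.I)
      rw [hvdef, hv'def]
      rw [mul_div_assoc, div_self hlI, mul_one] at h3
      exact h3
    have hucont : ContinuousOn u (Set.uIcc a (M+1)) := by
      rw [Set.uIcc_of_le hcase.le]
      exact fun s hs => ((hu s hs).continuousAt).continuousWithinAt
    have hvcont : ContinuousOn v (Set.uIcc a (M+1)) :=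
      fun s hs => ((hv s).continuousAt).continuousWithinAt
    have hsub : Set.uIcc a (M+1) ⊆ Set.Ioi 1 := by
      rw [Set.uIcc_of_le hcase.le]
      exact fun s hs => lt_of_lt_of_le ha1 hs.1
    have hrpowc : ∀ c : ℝ, ContinuousOn (fun s : ℝ => (s - 1) ^ c) (Set.uIcc a (M+1)) := by
      intro c s hs
      exact ((continuousAt_id.sub continuousAt_const).rpow_const
        (Or.inl (by exact sub_ne_zero.mpr (ne_of_gt (hsub hs))))).continuousWithinAt
    have hu'cont : ContinuousOn u' (Set.uIcc a (M+1)) := by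
      rw [hu'def]
      refine ContinuousOn.add ?_ ?_
      · exact (Complex.continuous_ofReal.comp_continuousOn
          ((hrpowc (-(1:ℝ)/2 - 1)).const_smul (-(1:ℝ)/2))).mul hθc.continuousOn
      · exact (Complex.continuous_ofReal.comp_continuousOn (hrpowc (-(1:ℝ)/2))).mul
          hθ'c.continuousOn
    have hu'int : IntervalIntegrable u' volume a (M+1) := hu'cont.intervalIntegrable
    have hcexp : Continuous fun s : ℝ => Complex.exp ((l:ℂ) * (s:ℂ) * Complex.I) :=
      Complex.continuous_exp.comp
        ((continuous_const.mul Complex.continuous_ofReal).mul continuous_const)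
    have hv'int : IntervalIntegrable v' volume a (M+1) := by
      rw [hv'def]
      exact hcexp.intervalIntegrable _ _
    have hIBP := intervalIntegral.integral_mul_deriv_eq_deriv_mul_of_hasDerivAt
      (a := a) (b := M+1) hucont hvcont
      (fun s hs => hu s (by
        rw [min_eq_left hcase.le, max_eq_right hcase.le] at hs
        exact Set.Ioo_subset_Icc_self hs))
      (fun s _ => hv s) hu'int hv'int
    have hFuv : ∀ s : ℝ, F s = u s * v' s := fun s => rfl
    have huN : u (M+1) = 0 := by
      rw [hudef]
      simp [hθ0 (M+1) (lt_add_one M)]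
    -- norm bounds
    have hua : ‖u a‖ ≤ sL * K := by
      rw [hudef]
      simp only [norm_mul, Complex.norm_real, Real.norm_eq_abs]
      rw [show a - 1 = δ by rw [hadef]; ring, hδrpow, abs_of_nonneg hsL0.le]
      exact mul_le_mul_of_nonneg_left (hKθ a) hsL0.le
    have hvnorm : ∀ s : ℝ, ‖v s‖ = L⁻¹ := fun s => by
      rw [hvdef]
      simp only [norm_div, hexp, hnormlI, one_div]
    have huava : ‖u a * v a‖ ≤ sL * K * L⁻¹ := by
      rw [norm_mul, hvnorm]
      exact mul_le_mul_of_nonneg_right hua (by positivity)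
    -- bound on the derivative integral
    have hu'bound : ∀ s ∈ Set.Icc a (M+1), ‖u' s * v s‖ ≤
        (K * (1/2) * (s-1) ^ (-(1:ℝ)/2 - 1) + K * (s-1) ^ (-(1:ℝ)/2)) * L⁻¹ := by
      intro s hs
      have hs1 : (1:ℝ) < s := lt_of_lt_of_le ha1 hs.1
      have h1 : (0:ℝ) ≤ (s-1) ^ (-(1:ℝ)/2 - 1) := Real.rpow_nonneg (by linarith) _
      have h2 : (0:ℝ) ≤ (s-1) ^ (-(1:ℝ)/2) := Real.rpow_nonneg (by linarith) _
      rw [norm_mul, hvnorm]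
      refine mul_le_mul_of_nonneg_right ?_ (by positivity)
      rw [hu'def]
      refine (norm_add_le _ _).trans ?_
      simp only [norm_mul, Complex.norm_real, Real.norm_eq_abs]
      rw [abs_of_nonneg h1, abs_of_nonneg h2, show |(-(1:ℝ)/2)| = 1/2 by norm_num]
      have t1 := hKθ s
      have t2 := hKθ' s
      nlinarith [norm_nonneg (θ s), norm_nonneg (deriv θ s)]
    have hI1 : (∫ s in a..(M+1), (s-1) ^ (-(1:ℝ)/2 - 1)) ≤ 2 * sL := by
      rw [intervalIntegral.integral_comp_sub_right (fun y : ℝ => y ^ (-(1:ℝ)/2 - 1)) 1,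
        show a - 1 = δ by rw [hadef]; ring, show M + 1 - 1 = M by ring,
        integral_rpow (Or.inr ⟨by norm_num, Set.notMem_uIcc_of_lt hδ0 (by linarith)⟩),
        show (-(1:ℝ)/2 - 1 + 1) = -(1:ℝ)/2 by ring, hδrpow]
      have hM0 : (0:ℝ) ≤ M ^ (-(1:ℝ)/2) := Real.rpow_nonneg (by linarith) _
      have hr : (M ^ (-(1:ℝ)/2) - sL) / (-(1:ℝ)/2) = 2*sL - 2*M ^ (-(1:ℝ)/2) := by ring
      rw [hr]
      linarith
    have hI2 : (∫ s in a..(M+1), (s-1) ^ (-(1:ℝ)/2)) ≤ 2 * Real.sqrt M := by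
      rw [intervalIntegral.integral_comp_sub_right (fun y : ℝ => y ^ (-(1:ℝ)/2)) 1,
        show a - 1 = δ by rw [hadef]; ring, show M + 1 - 1 = M by ring,
        integral_rpow (Or.inl (by norm_num)),
        show (-(1:ℝ)/2 + 1) = (1:ℝ)/2 by ring, hδrpow']
      have hd0 : (0:ℝ) ≤ sL⁻¹ := by positivity
      have hMs' : M ^ ((1:ℝ)/2) = Real.sqrt M := by
        rw [Real.sqrt_eq_rpow]
      have hr : (M ^ ((1:ℝ)/2) - sL⁻¹) / ((1:ℝ)/2) = 2*M ^ ((1:ℝ)/2) - 2*sL⁻¹ := by ring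
      rw [hr, hMs']
      linarith
    have hint1 : IntervalIntegrable (fun s : ℝ => (s-1) ^ (-(1:ℝ)/2 - 1)) volume a (M+1) :=
      (hrpowc _).intervalIntegrable
    have hint2 : IntervalIntegrable (fun s : ℝ => (s-1) ^ (-(1:ℝ)/2)) volume a (M+1) :=
      (hrpowc _).intervalIntegrable
    have hBint : IntervalIntegrable (fun s : ℝ =>
        (K * (1/2) * (s-1) ^ (-(1:ℝ)/2 - 1) + K * (s-1) ^ (-(1:ℝ)/2)) * L⁻¹) volume a (M+1) :=
      ((hint1.const_mul _).add (hint2.const_mul _)).mul_const _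
    have hBnonneg : (0:ℝ) ≤ ∫ s in a..(M+1),
        (K * (1/2) * (s-1) ^ (-(1:ℝ)/2 - 1) + K * (s-1) ^ (-(1:ℝ)/2)) * L⁻¹ := by
      refine intervalIntegral.integral_nonneg hcase.le (fun s hs => ?_)
      have hs1 : (1:ℝ) < s := lt_of_lt_of_le ha1 hs.1
      have h1 : (0:ℝ) ≤ (s-1) ^ (-(1:ℝ)/2 - 1) := Real.rpow_nonneg (by linarith) _
      have h2 : (0:ℝ) ≤ (s-1) ^ (-(1:ℝ)/2) := Real.rpow_nonneg (by linarith) _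
      positivity
    have hBval : (∫ s in a..(M+1),
        (K * (1/2) * (s-1) ^ (-(1:ℝ)/2 - 1) + K * (s-1) ^ (-(1:ℝ)/2)) * L⁻¹)
        ≤ (K * (1/2) * (2*sL) + K * (2*Real.sqrt M)) * L⁻¹ := by
      rw [intervalIntegral.integral_mul_const,
        intervalIntegral.integral_add (hint1.const_mul _) (hint2.const_mul _),
        intervalIntegral.integral_const_mul, intervalIntegral.integral_const_mul]
      refine mul_le_mul_of_nonneg_right ?_ (by positivity)
      have h1 := mul_le_mul_of_nonneg_left hI1 (by positivity : (0:ℝ) ≤ K * (1/2))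
      have h2 := mul_le_mul_of_nonneg_left hI2 hK0.le
      linarith
    have hP2b : ‖∫ s in a..(M+1), u' s * v s‖
        ≤ (K * (1/2) * (2*sL) + K * (2*Real.sqrt M)) * L⁻¹ := by
      refine (intervalIntegral.norm_integral_le_of_norm_le hcase.le ?_ hBint).trans ?_
      · exact ae_of_all _ fun s hs => hu'bound s (Set.Ioc_subset_Icc_self hs)
      · exact hBval
    -- assemble piece 2
    have hP2 : ‖∫ s in Set.Ioi a, F s‖
        ≤ sL * K * L⁻¹ + (K * (1/2) * (2*sL) + K * (2*Real.sqrt M)) * L⁻¹ := by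
      rw [hIoia]
      have : (∫ s in a..(M+1), F s)
          = u (M+1) * v (M+1) - u a * v a - ∫ s in a..(M+1), u' s * v s := by
        rw [← hIBP]
      rw [this, huN, zero_mul, zero_sub]
      refine (norm_sub_le _ _).trans ?_
      rw [norm_neg]
      exact add_le_add huava hP2b
    -- final arithmetic
    rw [hsplit]
    refine (norm_add_le _ _).trans ?_
    refine (add_le_add hP1 hP2).trans ?_
    have hinv : sL * sL⁻¹ = 1 := mul_inv_cancel₀ hsL0.ne'
    have hainv : sL * L⁻¹ = sL⁻¹ := by
      rw [← hsLsq, mul_inv, ← mul_assoc, hinv, one_mul]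
    have h2 : sL⁻¹ ≤ 2 := by
      have h3 := one_div_le_one_div_of_le (by norm_num : (0:ℝ) < 1/2) hsLhalf
      rw [one_div] at h3
      norm_num at h3
      linarith
    have hbinv : L⁻¹ ≤ 2 * sL⁻¹ := by
      rw [← hsLsq, mul_inv]
      exact mul_le_mul_of_nonneg_right h2 (inv_nonneg.mpr hsL0.le)
    have hMK : (0:ℝ) ≤ K * (2*Real.sqrt M) := by positivity
    have e1 : sL * K * L⁻¹ = K * sL⁻¹ := by
      rw [mul_comm sL K, mul_assoc, hainv]
    have e2 : K * (1/2) * (2*sL) * L⁻¹ = K * sL⁻¹ := by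
      rw [show K * (1/2) * (2*sL) = K * sL by ring, mul_assoc, hainv]
    have e3 : K * (2*Real.sqrt M) * L⁻¹ ≤ K * (2*Real.sqrt M) * (2 * sL⁻¹) :=
      mul_le_mul_of_nonneg_left hbinv hMK
    rw [div_eq_mul_inv (2*K) sL, div_eq_mul_inv (4*K*(1+Real.sqrt M)) sL, add_mul, e1, e2,
      show 4*K*(1+Real.sqrt M)*sL⁻¹
        = 2*K*sL⁻¹ + K*sL⁻¹ + K*sL⁻¹ + K*(2*Real.sqrt M)*(2*sL⁻¹) by ring]
    linarith [e3]

/-- Oscillatory integral bound: for `θ ∈ C¹` supported in `[0,M]`,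
`J(t,x) = ∫_1^∞ (s-1)^{-1/2} θ(s) e^{ix²s/(4t)} ds` satisfies
`|J(t,x)| ≤ C √|t|/x` whenever `x > √|t| > 0`. -/
theorem oscillatory_integral_sqrt_bound
    (M : ℝ) (hM : 1 < M) (θ : ℝ → ℂ) (hθ : ContDiff ℝ 1 θ)
    (hsupp : Function.support θ ⊆ Set.Icc 0 M) :
    ∃ C > 0, ∀ t x : ℝ, t ≠ 0 → Real.sqrt |t| < x →
      ‖∫ s in Set.Ioi (1:ℝ),
          (((s - 1) ^ (-(1:ℝ)/2) : ℝ) : ℂ) * θ s *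
            Complex.exp (Complex.I * (x : ℂ) ^ 2 * (s : ℂ) / (4 * (t : ℂ)))‖ ≤
        C * Real.sqrt |t| / x := by
  obtain ⟨C, hC0, hC⟩ := osc_key M hM θ hθ hsupp
  refine ⟨2*C, by positivity, ?_⟩
  intro t x ht hx
  have ht0 : 0 < |t| := abs_pos.mpr ht
  have hst : 0 < Real.sqrt |t| := Real.sqrt_pos.mpr ht0
  have hx0 : 0 < x := lt_trans hst hx
  set l := x^2 / (4*t) with hl
  have hxt : |t| < x^2 := by
    have h1 : Real.sqrt |t| * Real.sqrt |t| = |t| := Real.mul_self_sqrt ht0.le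
    nlinarith
  have habs : |l| = x^2/(4*|t|) := by
    rw [hl, abs_div, abs_of_nonneg (sq_nonneg x), abs_mul,
      abs_of_nonneg (by norm_num : (0:ℝ) ≤ 4)]
  have h14 : 1/4 ≤ |l| := by
    rw [habs, le_div_iff₀ (by positivity)]
    linarith
  have hsq : (x / (2*Real.sqrt |t|))^2 = x^2/(4*|t|) := by
    rw [div_pow, mul_pow, Real.sq_sqrt ht0.le]
    norm_num
  have hsqrtl : Real.sqrt |l| = x / (2 * Real.sqrt |t|) := by
    rw [habs, ← hsq, Real.sqrt_sq (by positivity)]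
  have heq : ∀ s : ℝ,
      Complex.exp (Complex.I * (x:ℂ)^2 * (s:ℂ) / (4 * (t:ℂ)))
        = Complex.exp ((l : ℂ) * (s : ℂ) * Complex.I) := by
    intro s
    congr 1
    have ht' : (t:ℂ) ≠ 0 := Complex.ofReal_ne_zero.mpr ht
    rw [hl]
    push_cast
    field_simp
  have hbound := hC l h14
  rw [hsqrtl] at hbound
  calc ‖∫ s in Set.Ioi (1:ℝ),
          (((s - 1) ^ (-(1:ℝ)/2) : ℝ) : ℂ) * θ s *
            Complex.exp (Complex.I * (x : ℂ) ^ 2 * (s : ℂ) / (4 * (t : ℂ)))‖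
      = ‖∫ s in Set.Ioi (1:ℝ), (((s - 1) ^ (-(1:ℝ)/2) : ℝ) : ℂ) * θ s *
            Complex.exp ((l : ℂ) * (s : ℂ) * Complex.I)‖ := by simp only [heq]
    _ ≤ C / (x / (2 * Real.sqrt |t|)) := hbound
    _ = 2*C*Real.sqrt |t| / x := by
        field_simp
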